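/- Let |Ψ⟩ = (a|00⟩ + b|S⟩ + c·e^{iφ}|11⟩)⊗|0⟩ with a, b, c, φ real. Then Q(|Ψ⟩⟨Ψ|) = (15a² + 10b² + 5c²)·𝟙 + 2√2·b·(3a + 2c·cos φ)·X + 4√2·bc·sin φ·Y + (9a² + 2b² - c²)·Z, where Q(M) := 4!·tr_{1,2,3}[P₄(M⊗𝟙)] with P₄ the projector onto Sym⁴(ℂ²), and X, Y, Z are the Pauli matrices. Consequently the spectral norm ‖Q(|Ψ⟩⟨Ψ|)‖ = 15a² + 10b² + 5c² + sqrt(8b²|3a + 2c·e^{iφ}|² + (9a² + 2b² - c²)²). -/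

import Mathlib

/-- The projector onto the symmetric subspace `Sym⁴(ℂ²)` of `(ℂ²)^{⊗4}`. -/
noncomputable def P4 : Matrix (Fin 4 → Fin 2) (Fin 4 → Fin 2) ℂ :=
  fun v w => (1/24) * ∑ σ : Equiv.Perm (Fin 4), if (fun i => w (σ i)) = v then 1 else 0

/-- The first three tensor factors of an index of `(ℂ²)^{⊗4}`. -/
def front (v : Fin 4 → Fin 2) : Fin 3 → Fin 2 := fun i => v i.castSucc

/-- `M ⊗ 𝟙` for `M` an operator on `(ℂ²)^{⊗3}`. -/
noncomputable def tensId (M : Matrix (Fin 3 → Fin 2) (Fin 3 → Fin 2) ℂ) :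
    Matrix (Fin 4 → Fin 2) (Fin 4 → Fin 2) ℂ :=
  fun v w => M (front v) (front w) * (if v (Fin.last 3) = w (Fin.last 3) then 1 else 0)

/-- `Q(M) = 4!·tr_{1,2,3}[P₄ (M ⊗ 𝟙)]`. -/
noncomputable def Qmap (M : Matrix (Fin 3 → Fin 2) (Fin 3 → Fin 2) ℂ) :
    Matrix (Fin 2) (Fin 2) ℂ :=
  fun x y => 24 * ∑ u : Fin 3 → Fin 2, (P4 * tensId M) (Fin.snoc u x) (Fin.snoc u y)

noncomputable def σX : Matrix (Fin 2) (Fin 2) ℂ := !![0, 1; 1, 0]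
noncomputable def σY : Matrix (Fin 2) (Fin 2) ℂ := !![0, -Complex.I; Complex.I, 0]
noncomputable def σZ : Matrix (Fin 2) (Fin 2) ℂ := !![1, 0; 0, -1]

/-- Coefficients of `|Φ⟩ = a|00⟩ + b|S⟩ + c e^{iφ}|11⟩`. -/
noncomputable def Φm (a b c φ : ℝ) (i j : Fin 2) : ℂ :=
  if i = 0 ∧ j = 0 then (a : ℂ)
  else if i = 1 ∧ j = 1 then (c : ℂ) * Complex.exp (Complex.I * (φ : ℂ))
  else (b : ℂ) / (Real.sqrt 2 : ℂ)

/-- `|Ψ⟩ = |Φ⟩ ⊗ |0⟩`. -/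
noncomputable def Ψv (a b c φ : ℝ) (v : Fin 3 → Fin 2) : ℂ :=
  if v 2 = 0 then Φm a b c φ (v 0) (v 1) else 0

/-- `|Ψ⟩⟨Ψ|`. -/
noncomputable def outer (a b c φ : ℝ) :
    Matrix (Fin 3 → Fin 2) (Fin 3 → Fin 2) ℂ :=
  fun v w => Ψv a b c φ v * (starRingEnd ℂ) (Ψv a b c φ w)

section Aux

open Matrix

set_option maxHeartbeats 4000000
set_option synthInstance.maxHeartbeats 400000

lemma aux_permcount : ∀ v w : Fin 4 → Fin 2,
    ((Finset.univ.filter (fun σ : Equiv.Perm (Fin 4) => (fun i => w (σ i)) = v)).card)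
      = if (∑ i, (v i).val) = (∑ i, (w i).val)
        then (∑ i, (v i).val).factorial * (4 - ∑ i, (v i).val).factorial else 0 := by decide

lemma aux_P4_apply (v w : Fin 4 → Fin 2) : P4 v w =
    if (∑ i, (v i).val) = (∑ i, (w i).val)
      then (((∑ i, (v i).val).factorial * (4 - ∑ i, (v i).val).factorial : ℕ) : ℂ)/24 else 0 := by
  rw [P4, Finset.sum_boole, aux_permcount]
  split <;> push_cast <;> ring

lemma aux_sum3 (f : (Fin 3 → Fin 2) → ℂ) : ∑ v, f v =
    f ![0,0,0] + f ![0,0,1] + f ![0,1,0] + f ![0,1,1] +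
    f ![1,0,0] + f ![1,0,1] + f ![1,1,0] + f ![1,1,1] := by
  rw [show (Finset.univ : Finset (Fin 3 → Fin 2)) =
      {![0,0,0], ![0,0,1], ![0,1,0], ![0,1,1], ![1,0,0], ![1,0,1], ![1,1,0], ![1,1,1]} from by decide]
  rw [Finset.sum_insert (by decide), Finset.sum_insert (by decide), Finset.sum_insert (by decide),
      Finset.sum_insert (by decide), Finset.sum_insert (by decide), Finset.sum_insert (by decide),
      Finset.sum_insert (by decide), Finset.sum_singleton]
  ring

lemma aux_sum4 (f : (Fin 4 → Fin 2) → ℂ) : ∑ v, f v =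
    f ![0,0,0,0] + f ![0,0,0,1] + f ![0,0,1,0] + f ![0,0,1,1] +
    f ![0,1,0,0] + f ![0,1,0,1] + f ![0,1,1,0] + f ![0,1,1,1] +
    f ![1,0,0,0] + f ![1,0,0,1] + f ![1,0,1,0] + f ![1,0,1,1] +
    f ![1,1,0,0] + f ![1,1,0,1] + f ![1,1,1,0] + f ![1,1,1,1] := by
  rw [show (Finset.univ : Finset (Fin 4 → Fin 2)) =
      {![0,0,0,0], ![0,0,0,1], ![0,0,1,0], ![0,0,1,1], ![0,1,0,0], ![0,1,0,1], ![0,1,1,0], ![0,1,1,1],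
       ![1,0,0,0], ![1,0,0,1], ![1,0,1,0], ![1,0,1,1], ![1,1,0,0], ![1,1,0,1], ![1,1,1,0], ![1,1,1,1]} from by decide]
  rw [Finset.sum_insert (by decide), Finset.sum_insert (by decide), Finset.sum_insert (by decide),
      Finset.sum_insert (by decide), Finset.sum_insert (by decide), Finset.sum_insert (by decide),
      Finset.sum_insert (by decide), Finset.sum_insert (by decide), Finset.sum_insert (by decide),
      Finset.sum_insert (by decide), Finset.sum_insert (by decide), Finset.sum_insert (by decide),
      Finset.sum_insert (by decide), Finset.sum_insert (by decide), Finset.sum_insert (by decide),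
      Finset.sum_singleton]
  ring

lemma aux_snoc_mk (i j k x : Fin 2) : (Fin.snoc ![i,j,k] x : Fin 4 → Fin 2) = ![i,j,k,x] := by
  ext m; fin_cases m <;> rfl

lemma aux_front_mk (i j k l : Fin 2) : front ![i,j,k,l] = ![i,j,k] := by
  ext m; fin_cases m <;> rfl

lemma aux_part1 (a b c φ : ℝ) :
    Qmap (outer a b c φ) =
      ((15*a^2 + 10*b^2 + 5*c^2 : ℝ) : ℂ) • (1 : Matrix (Fin 2) (Fin 2) ℂ)
        + ((2*Real.sqrt 2*b*(3*a + 2*c*Real.cos φ) : ℝ) : ℂ) • σX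
        + ((4*Real.sqrt 2*b*c*Real.sin φ : ℝ) : ℂ) • σY
        + ((9*a^2 + 2*b^2 - c^2 : ℝ) : ℂ) • σZ := by
  have hs2 : ((Real.sqrt 2 : ℝ) : ℂ)^2 = 2 := by
    rw [show ((Real.sqrt 2:ℝ):ℂ)^2 = ((Real.sqrt 2 ^2 : ℝ) : ℂ) by push_cast; ring,
      Real.sq_sqrt (by norm_num : (0:ℝ) ≤ 2)]
    norm_num
  have hinv : ((Real.sqrt 2 : ℝ) : ℂ)⁻¹ = ((Real.sqrt 2 : ℝ) : ℂ)/2 := by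
    have hne : ((Real.sqrt 2 : ℝ) : ℂ) ≠ 0 := by
      intro h
      rw [h] at hs2
      norm_num at hs2
    field_simp
    linear_combination (-1 : ℂ) * hs2
  have hinv2 : ((Real.sqrt 2 : ℝ) : ℂ)⁻¹^2 = 1/2 := by
    rw [inv_pow, hs2]
    norm_num
  have hE : Complex.exp (Complex.I * (φ:ℝ)) = Complex.cos φ + Complex.sin φ * Complex.I := by
    rw [mul_comm, Complex.exp_mul_I]
  have hP : ((Real.sin φ : ℝ) : ℂ)^2 + ((Real.cos φ : ℝ) : ℂ)^2 = 1 := by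
    exact_mod_cast congrArg (Complex.ofReal) (Real.sin_sq_add_cos_sq φ)
  ext x y
  fin_cases x <;> fin_cases y <;>
    simp only [Qmap, Matrix.mul_apply, aux_sum3, aux_sum4, aux_snoc_mk, tensId, aux_front_mk,
      aux_P4_apply, outer, Ψv, Φm, σX, σY, σZ, Matrix.add_apply, Matrix.smul_apply,
      Matrix.one_apply, Fin.sum_univ_four, Matrix.cons_val] <;>
    norm_num [Fin.sum_univ_four, Fin.last, Nat.factorial] <;>
    simp only [hE, ← Complex.ofReal_cos, ← Complex.ofReal_sin, _root_.map_add, _root_.map_mul,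
      Complex.conj_ofReal, Complex.conj_I]
  · linear_combination (24*(b:ℂ)^2) * hinv2 + (4*(c:ℂ)^2) * hP
      - (4*(c:ℂ)^2*((Real.sin φ : ℝ):ℂ)^2) * Complex.I_sq
  · linear_combination (12*(a:ℂ)*(b:ℂ) + 8*(b:ℂ)*(c:ℂ)*((Real.cos φ : ℝ):ℂ)
      - 8*(b:ℂ)*(c:ℂ)*((Real.sin φ : ℝ):ℂ)*Complex.I) * hinv
  · linear_combination (12*(a:ℂ)*(b:ℂ) + 8*(b:ℂ)*(c:ℂ)*((Real.cos φ : ℝ):ℂ)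
      + 8*(b:ℂ)*(c:ℂ)*((Real.sin φ : ℝ):ℂ)*Complex.I) * hinv
  · linear_combination (16*(b:ℂ)^2) * hinv2 + (6*(c:ℂ)^2) * hP
      - (6*(c:ℂ)^2*((Real.sin φ : ℝ):ℂ)^2) * Complex.I_sq

lemma aux_eig_lower (A : Matrix (Fin 2) (Fin 2) ℂ) (lam : ℝ) (hl : 0 ≤ lam) (v : Fin 2 → ℂ)
    (hv : v ≠ 0) (heig : A.mulVec v = ((lam : ℝ) : ℂ) • v) :
    lam ≤ ‖toEuclideanCLM (𝕜 := ℂ) A‖ := by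
  set V : EuclideanSpace ℂ (Fin 2) := (WithLp.equiv 2 (Fin 2 → ℂ)).symm v with hV
  have happ : toEuclideanCLM (𝕜 := ℂ) A V = ((lam : ℝ) : ℂ) • V := by
    rw [hV, WithLp.equiv_symm_apply, toEuclideanCLM_toLp]
    show _ = (WithLp.equiv 2 (Fin 2 → ℂ)).symm (((lam : ℝ) : ℂ) • v)
    rw [heig]
    rfl
  have hVn : ‖V‖ ≠ 0 := by
    simp only [ne_eq, norm_eq_zero]
    intro h
    exact hv (by simpa [hV] using congrArg (WithLp.equiv 2 (Fin 2 → ℂ)) h)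
  have h1 : ‖toEuclideanCLM (𝕜 := ℂ) A V‖ ≤ ‖toEuclideanCLM (𝕜 := ℂ) A‖ * ‖V‖ :=
    ContinuousLinearMap.le_opNorm _ _
  rw [happ, norm_smul] at h1
  have : ‖((lam : ℝ) : ℂ)‖ = lam := by simp [abs_of_nonneg hl]
  rw [this] at h1
  exact le_of_mul_le_mul_right h1 (lt_of_le_of_ne (norm_nonneg V) (Ne.symm hVn))

lemma aux_norm_pauli (t x y z : ℝ) (ht : 0 ≤ t) :
    ‖toEuclideanCLM (𝕜 := ℂ)
        !![((t : ℝ) : ℂ) + z, (x : ℂ) - (y : ℂ) * Complex.I;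
           (x : ℂ) + (y : ℂ) * Complex.I, ((t : ℝ) : ℂ) - z]‖
      = t + Real.sqrt (x^2 + y^2 + z^2) := by
  set A : Matrix (Fin 2) (Fin 2) ℂ :=
    !![((t : ℝ) : ℂ) + z, (x : ℂ) - (y : ℂ) * Complex.I;
       (x : ℂ) + (y : ℂ) * Complex.I, ((t : ℝ) : ℂ) - z] with hA
  set r := Real.sqrt (x^2 + y^2 + z^2) with hrdef
  have hr0 : 0 ≤ r := Real.sqrt_nonneg _
  have hr2 : r^2 = x^2 + y^2 + z^2 := Real.sq_sqrt (by positivity)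
  have hzr : z ≤ r := by nlinarith [sq_nonneg x, sq_nonneg y, sq_nonneg (r - z), sq_nonneg (r + z)]
  have hmz : -r ≤ z := by nlinarith [sq_nonneg x, sq_nonneg y, sq_nonneg (r - z), sq_nonneg (r + z)]
  have habs : ∀ ζ : ℂ, ‖ζ‖^2 = ζ.re^2 + ζ.im^2 := fun ζ => by
    rw [Complex.sq_norm, Complex.normSq_apply]; ring
  have hub : ∀ u : EuclideanSpace ℂ (Fin 2),
      ‖toEuclideanCLM (𝕜 := ℂ) A u‖ ≤ (t + r) * ‖u‖ := by
    intro u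
    have h0 : (toEuclideanCLM (𝕜 := ℂ) A u) 0
        = (((t:ℝ):ℂ) + z) * u 0 + ((x:ℂ) - (y:ℂ)*Complex.I) * u 1 := by
      show A.mulVec (fun j => u j) 0 = _
      simp [hA, Matrix.mulVec, dotProduct, Fin.sum_univ_two]
    have h1 : (toEuclideanCLM (𝕜 := ℂ) A u) 1
        = ((x:ℂ) + (y:ℂ)*Complex.I) * u 0 + (((t:ℝ):ℂ) - z) * u 1 := by
      show A.mulVec (fun j => u j) 1 = _
      simp [hA, Matrix.mulVec, dotProduct, Fin.sum_univ_two]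
    set p := (u 0).re with hp
    set q := (u 0).im with hq
    set s := (u 1).re with hs
    set w := (u 1).im with hw
    have key : 0 ≤ r*(p^2+q^2+s^2+w^2)
        - (z*(p^2+q^2-s^2-w^2) + 2*x*(p*s+q*w) + 2*y*(p*w-q*s)) := by
      rcases eq_or_lt_of_le (by linarith : 0 ≤ r + z) with hc | hc
      · have hx : x = 0 := by nlinarith [sq_nonneg x, sq_nonneg y]
        have hy : y = 0 := by nlinarith [sq_nonneg x, sq_nonneg y]
        have hz : z = -r := by linarith
        rw [hx, hy, hz]
        nlinarith [sq_nonneg p, sq_nonneg q, mul_nonneg hr0 (sq_nonneg p),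
          mul_nonneg hr0 (sq_nonneg q)]
      · nlinarith [sq_nonneg (x*p - y*q - (r+z)*s), sq_nonneg (x*q + y*p - (r+z)*w), hc,
          mul_pos hc hc]
    rw [EuclideanSpace.norm_eq, EuclideanSpace.norm_eq]
    rw [show (t + r) * Real.sqrt (∑ i, ‖u i‖^2)
        = Real.sqrt ((t+r)^2 * ∑ i, ‖u i‖^2) by
      rw [Real.sqrt_mul (by positivity), Real.sqrt_sq (by linarith)]]
    apply Real.sqrt_le_sqrt
    rw [Fin.sum_univ_two, Fin.sum_univ_two, h0, h1]
    rw [habs, habs, habs, habs]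
    simp only [Complex.add_re, Complex.add_im, Complex.mul_re, Complex.mul_im,
      Complex.sub_re, Complex.sub_im, Complex.I_re, Complex.I_im,
      Complex.ofReal_re, Complex.ofReal_im, ← hp, ← hq, ← hs, ← hw]
    have e1 : p^2*(r^2) = p^2*(x^2+y^2+z^2) := by rw [hr2]
    have e2 : q^2*(r^2) = q^2*(x^2+y^2+z^2) := by rw [hr2]
    have e3 : s^2*(r^2) = s^2*(x^2+y^2+z^2) := by rw [hr2]
    have e4 : w^2*(r^2) = w^2*(x^2+y^2+z^2) := by rw [hr2]
    nlinarith [mul_nonneg ht key, e1, e2, e3, e4]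
  have hr2c : ((r:ℝ):ℂ)^2 = ((x:ℝ):ℂ)^2 + ((y:ℝ):ℂ)^2 + ((z:ℝ):ℂ)^2 := by
    rw [show ((r:ℝ):ℂ)^2 = (((r^2 : ℝ)):ℂ) by push_cast; ring, hr2]; push_cast; ring
  have hlow : t + r ≤ ‖toEuclideanCLM (𝕜 := ℂ) A‖ := by
    by_cases hxy : x = 0 ∧ y = 0
    · rcases le_or_gt 0 z with hz | hz
      · have hrz : r = z := by
          rw [hrdef, hxy.1, hxy.2]
          rw [show (0:ℝ)^2 + 0^2 + z^2 = z^2 by ring, Real.sqrt_sq_eq_abs, abs_of_nonneg hz]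
        apply aux_eig_lower A (t+r) (by linarith) ![1, 0]
        · intro h
          have := congrFun h 0
          simp at this
        · funext i
          fin_cases i <;>
            simp [hA, Matrix.mulVec, dotProduct, Fin.sum_univ_two, hxy.1, hxy.2, hrz] <;>
            push_cast <;> ring
      · have hrz : r = -z := by
          rw [hrdef, hxy.1, hxy.2]
          rw [show (0:ℝ)^2 + 0^2 + z^2 = z^2 by ring, Real.sqrt_sq_eq_abs, abs_of_neg hz]
        apply aux_eig_lower A (t+r) (by linarith) ![0, 1]
        · intro h
          have := congrFun h 1
          simp at this
        · funext i
          fin_cases i <;>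
            simp [hA, Matrix.mulVec, dotProduct, Fin.sum_univ_two, hxy.1, hxy.2, hrz] <;>
            push_cast <;> ring
    · apply aux_eig_lower A (t+r) (by linarith) ![(x:ℂ) - (y:ℂ)*Complex.I, ((r:ℝ):ℂ) - (z:ℂ)]
      · intro h
        have h0 := congrFun h 0
        simp only [Matrix.cons_val_zero, Pi.zero_apply, sub_eq_zero] at h0
        have hre := congrArg Complex.re h0
        have him := congrArg Complex.im h0
        simp [Complex.ofReal_re, Complex.ofReal_im, Complex.mul_re, Complex.mul_im] at hre him
        exact hxy ⟨hre, him.symm⟩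
      · funext i
        fin_cases i
        · simp [hA, Matrix.mulVec, dotProduct, Fin.sum_univ_two]
          push_cast
          ring
        · simp [hA, Matrix.mulVec, dotProduct, Fin.sum_univ_two]
          push_cast
          linear_combination (-1 : ℂ) * hr2c - ((y:ℝ):ℂ)^2 * Complex.I_sq
  refine le_antisymm ?_ hlow
  exact ContinuousLinearMap.opNorm_le_bound _ (by linarith) hub

end Aux

set_option maxHeartbeats 4000000 in
set_option synthInstance.maxHeartbeats 400000 in
theorem stmt10 (a b c φ : ℝ) :
    Qmap (outer a b c φ) =
      ((15*a^2 + 10*b^2 + 5*c^2 : ℝ) : ℂ) • (1 : Matrix (Fin 2) (Fin 2) ℂ)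
        + ((2*Real.sqrt 2*b*(3*a + 2*c*Real.cos φ) : ℝ) : ℂ) • σX
        + ((4*Real.sqrt 2*b*c*Real.sin φ : ℝ) : ℂ) • σY
        + ((9*a^2 + 2*b^2 - c^2 : ℝ) : ℂ) • σZ ∧
    ‖Matrix.toEuclideanCLM (𝕜 := ℂ) (Qmap (outer a b c φ))‖ =
      15*a^2 + 10*b^2 + 5*c^2 +
        Real.sqrt (8*b^2*((3*a + 2*c*Real.cos φ)^2 + (2*c*Real.sin φ)^2)
          + (9*a^2 + 2*b^2 - c^2)^2) := by
  have hpart1 := aux_part1 a b c φ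
  refine ⟨hpart1, ?_⟩
  have hM : Qmap (outer a b c φ) =
      !![(((15*a^2 + 10*b^2 + 5*c^2 : ℝ)) : ℂ) + ((9*a^2 + 2*b^2 - c^2 : ℝ) : ℂ),
         ((2*Real.sqrt 2*b*(3*a + 2*c*Real.cos φ) : ℝ) : ℂ)
           - ((4*Real.sqrt 2*b*c*Real.sin φ : ℝ) : ℂ) * Complex.I;
         ((2*Real.sqrt 2*b*(3*a + 2*c*Real.cos φ) : ℝ) : ℂ)
           + ((4*Real.sqrt 2*b*c*Real.sin φ : ℝ) : ℂ) * Complex.I,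
         (((15*a^2 + 10*b^2 + 5*c^2 : ℝ)) : ℂ) - ((9*a^2 + 2*b^2 - c^2 : ℝ) : ℂ)] := by
    rw [hpart1]
    ext i j
    fin_cases i <;> fin_cases j <;>
      simp [σX, σY, σZ, Matrix.add_apply, Matrix.smul_apply, Matrix.one_apply] <;>
      push_cast <;> ring
  rw [hM, aux_norm_pauli (15*a^2 + 10*b^2 + 5*c^2) (2*Real.sqrt 2*b*(3*a + 2*c*Real.cos φ))
      (4*Real.sqrt 2*b*c*Real.sin φ) (9*a^2 + 2*b^2 - c^2) (by positivity)]
  congr 1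
  have h2r : Real.sqrt 2 ^ 2 = 2 := Real.sq_sqrt (by norm_num)
  congr 1
  linear_combination (4*b^2*(3*a+2*c*Real.cos φ)^2 + 16*b^2*c^2*(Real.sin φ)^2) * h2r
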